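/- In the PEV-based Diffusion Mechanism, hiding neighbors cannot help a non-selected critical agent: if under truthful reporting agent i = i_k is a critical agent preceding the selected agent i_t (k < t), with expected utility w_{i_{k+1}} − w_{i_k}, then under any misreport of her neighbor set in which the new selected agent j' is not a critical agent of the original welfare-maximizer j, her new utility w'_{i'_{k'+1}} − w'_{i'_{k'}} satisfies w'_{i'_{k'+1}} − w'_{i'_{k'}} ≤ w_{i_{k+1}} − w_{i_k}, because w'_{i'_{k'}} = w_{i_k} (removing i disconnects the same set of agents) and I((nil, θ̂'_{−i'_{k'+1}})) ⊆ I((nil, θ̂_{−i_{k+1}})) implies w'_{i'_{k'+1}} ≤ w_{i_{k+1}}. -/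

import Mathlib

open Finset

/-- An agent's report: a distribution over qualities, a cost, and a set of invited neighbours. -/
structure Report (A : Type*) where
  f : ℝ → ℝ
  c : ℝ
  nbrs : Finset A

/-- Reported expected welfare  E_{f}[Q] - c. -/
def welfare {A : Type*} (Q : Finset ℝ) (r : Report A) : ℝ :=
  (∑ q ∈ Q, q * r.f q) - r.c

/-- `f` is a probability mass function on the finite quality set `Q`. -/
def IsPMF (Q : Finset ℝ) (f : ℝ → ℝ) : Prop :=
  (∀ q ∈ Q, 0 ≤ f q) ∧ (∑ q ∈ Q, f q) = 1

/-- Edge of the reported (diffusion) graph, avoiding a removed set `R` of agents. -/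
def edge {A : Type*} (θ : A → Report A) (R : Set A) (a b : A) : Prop :=
  a ∉ R ∧ b ∉ R ∧ b ∈ (θ a).nbrs

/-- `i` participates: it is reachable from the requester (whose neighbours are `rs`)
avoiding the removed agents `R`.  `participates rs θ {i} k` is membership in I((nil, θ_{-i})). -/
def participates {A : Type*} (rs : Finset A) (θ : A → Report A) (R : Set A) (i : A) : Prop :=
  i ∉ R ∧ ∃ j ∈ rs, j ∉ R ∧ Relation.ReflTransGen (edge θ R) j i

/-- `l` is a simple path from (a neighbour of) the requester to `i` in the reported graph. -/
def pathTo {A : Type*} (rs : Finset A) (θ : A → Report A) (i : A) (l : List A) : Prop :=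
  l.Nodup ∧ l.Chain' (edge θ ∅) ∧ (∃ a, l.head? = some a ∧ a ∈ rs) ∧ l.getLast? = some i

/-- `i` is a critical agent of `j`: `i` lies on every simple path from the requester to `j`. -/
def critical {A : Type*} (rs : Finset A) (θ : A → Report A) (i j : A) : Prop :=
  ∀ l, pathTo rs θ j l → i ∈ l

/-- `v` is the maximum reported welfare among participants when `i` does not
participate (`0` if there are none). -/
def cmax {A : Type*} (Q : Finset ℝ) (rs : Finset A) (θ : A → Report A) (i : A) (v : ℝ) : Prop :=
  0 ≤ v ∧ (∀ k, participates rs θ {i} k → welfare Q (θ k) ≤ v) ∧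
    (v = 0 ∨ ∃ k, participates rs θ {i} k ∧ v = welfare Q (θ k))

/-- An execution of the PEV-based Diffusion Mechanism on report profile `θ`:
`seq 0, …, seq (m-1)` is the critical-agent sequence (i_1, …, i_m) of the
reported-welfare-maximizing agent `j = seq (m-1)`, `w k` the counterfactual maxima,
`t` the index of the selected agent, and `p q i` agent `i`'s payoff when the realized
quality is `q`. -/
structure PEVRun {A : Type*} (Q : Finset ℝ) (rs : Finset A) (θ : A → Report A) where
  m : ℕ
  hm : 0 < m
  seq : ℕ → A
  w : ℕ → ℝ
  t : ℕ
  ht : t < m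
  p : ℝ → A → ℝ
  /-- `j = seq (m-1)` maximizes reported expected welfare among participants -/
  hj : participates rs θ ∅ (seq (m-1)) ∧
    ∀ k, participates rs θ ∅ k → welfare Q (θ k) ≤ welfare Q (θ (seq (m-1)))
  hinj : ∀ k < m, ∀ k' < m, seq k = seq k' → k = k'
  /-- the sequence enumerates exactly the (participating) critical agents of `j` -/
  hcrit : ∀ i, (∃ k < m, seq k = i) ↔
    (critical rs θ i (seq (m-1)) ∧ participates rs θ ∅ i)
  /-- it is ordered by the criticality relation -/
  hord : ∀ k k', k < k' → k' < m → critical rs θ (seq k) (seq k')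
  /-- `w k` is the maximum reported welfare among I((nil, θ_{-seq k})) -/
  hw : ∀ k < m, cmax Q rs θ (seq k) (w k)
  /-- the selected agent is the first in the sequence whose reported welfare equals
  the next counterfactual maximum (and `j` if there is none) -/
  hsel : (t + 1 < m → welfare Q (θ (seq t)) = w (t + 1)) ∧
    ∀ k < t, welfare Q (θ (seq k)) ≠ w (k + 1)
  hpay1 : ∀ q, ∀ k < t, p q (seq k) = w (k + 1) - w k
  hpay2 : ∀ q, p q (seq t) = q - w t
  hpay3 : ∀ q, ∀ k, t < k → k < m → p q (seq k) = 0
  hpay4 : ∀ q i, (∀ k < m, seq k ≠ i) → p q i = 0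

section helpers
variable {A : Type*} {rs : Finset A} {θ θ' : A → Report A} {S : Set A}

lemma mem_of_getLast?_eq {l : List A} {x : A} (h : l.getLast? = some x) : x ∈ l := by
  obtain ⟨hne, rfl⟩ := List.mem_getLast?_eq_getLast h
  exact List.getLast_mem hne

lemma chain_rtg' : ∀ (t : List A) (a x : A), (a :: t).Chain' (edge θ ∅) →
    (a :: t).getLast? = some x → (∀ y ∈ a :: t, y ∉ S) →
    Relation.ReflTransGen (edge θ S) a x := by
  intro t
  induction t with
  | nil =>
    intro a x _ hl _
    obtain rfl : a = x := by simpa using hl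
    exact Relation.ReflTransGen.refl
  | cons c t' ih =>
    intro a x hc hl hS
    have he : edge θ ∅ a c := (List.isChain_cons_cons.mp hc).1
    have he' : edge θ S a c := ⟨hS a (by simp), hS c (by simp), he.2.2⟩
    refine Relation.ReflTransGen.head he' (ih c x (List.isChain_cons_cons.mp hc).2 ?_ ?_)
    · simpa using hl
    · intro y hy; exact hS y (by simp [hy])

lemma chain_rtg {l : List A} {a x : A} (hc : l.Chain' (edge θ ∅)) (hh : l.head? = some a)
    (hl : l.getLast? = some x) (hS : ∀ y ∈ l, y ∉ S) :
    Relation.ReflTransGen (edge θ S) a x := by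
  cases l with
  | nil => simp at hh
  | cons b t =>
    obtain rfl : b = a := by simpa using hh
    exact chain_rtg' t b x hc hl hS

lemma pathTo_participates {x : A} {l : List A} (h : pathTo rs θ x l)
    (hS : ∀ y ∈ l, y ∉ S) : participates rs θ S x := by
  obtain ⟨hnd, hc, ⟨a, hh, ha⟩, hl⟩ := h
  exact ⟨hS x (mem_of_getLast?_eq hl), a, ha, hS a (List.mem_of_mem_head? hh),
    chain_rtg hc hh hl hS⟩

lemma pathTo_split {x y : A} {l : List A} (h : pathTo rs θ x l) (hy : y ∈ l) :
    ∃ l₁ l₂, l = l₁ ++ y :: l₂ ∧ pathTo rs θ y (l₁ ++ [y]) := by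
  obtain ⟨hnd, hc, ⟨a, hh, ha⟩, hl⟩ := h
  obtain ⟨l₁, l₂, rfl⟩ := List.append_of_mem hy
  have hsub : List.Sublist (l₁ ++ [y]) (l₁ ++ y :: l₂) :=
    (List.append_sublist_append_left l₁).mpr (by simp)
  refine ⟨l₁, l₂, rfl, hnd.sublist hsub, ?_, ⟨a, ?_, ha⟩, List.getLast?_concat⟩
  · have : (l₁ ++ [y]) ++ l₂ = l₁ ++ y :: l₂ := by simp
    rw [← this] at hc
    exact (List.isChain_append.mp hc).1
  · cases l₁ with
    | nil => simpa using hh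
    | cons b t =>
      rw [List.head?_append_of_ne_nil _ (by simp)] at hh ⊢
      exact hh

lemma pathTo_mono (hmono : ∀ a b, edge θ' ∅ a b → edge θ ∅ a b) {x : A} {l : List A}
    (h : pathTo rs θ' x l) : pathTo rs θ x l :=
  ⟨h.1, h.2.1.imp hmono, h.2.2⟩

lemma critical_mono (hmono : ∀ a b, edge θ' ∅ a b → edge θ ∅ a b) {x y : A}
    (h : critical rs θ x y) : critical rs θ' x y :=
  fun l hl => h l (pathTo_mono hmono hl)

lemma participates_mono {S' : Set A} (hSS : S' ⊆ S) {x : A}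
    (h : participates rs θ S x) : participates rs θ S' x := by
  obtain ⟨hx, a, ha, haS, hrel⟩ := h
  exact ⟨fun hm => hx (hSS hm), a, ha, fun hm => haS (hSS hm),
    Relation.ReflTransGen.mono (fun u v (huv : edge θ S u v) => (⟨fun hm => huv.1 (hSS hm), fun hm => huv.2.1 (hSS hm), huv.2.2⟩ : edge θ S' u v)) _ _ hrel⟩

lemma participates_pathTo [DecidableEq A] {x : A} (h : participates rs θ S x) :
    ∃ l, pathTo rs θ x l ∧ ∀ y ∈ l, y ∉ S := by
  obtain ⟨hx, a, ha, haS, hrel⟩ := h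
  clear hx
  induction hrel with
  | refl => exact ⟨[a], ⟨by simp, List.isChain_singleton _, ⟨a, rfl, ha⟩, by simp⟩, by simpa⟩
  | @tail b c hab hbc ih =>
    obtain ⟨l, hl, hlS⟩ := ih
    by_cases hc : c ∈ l
    · obtain ⟨l₁, l₂, rfl, hl'⟩ := pathTo_split hl hc
      exact ⟨l₁ ++ [c], hl', fun y hy => hlS y (by simp at hy ⊢; tauto)⟩
    · obtain ⟨hnd, hch, ⟨a', hh, ha'⟩, hlast⟩ := hl
      refine ⟨l ++ [c], ⟨?_, ?_, ⟨a', ?_, ha'⟩, List.getLast?_concat⟩, ?_⟩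
      · simp [List.nodup_append, hnd, hc]
        rintro _ h rfl; exact hc h
      · refine List.isChain_append.mpr ?_
        refine ⟨hch, by simp, ?_⟩
        intro u hu v hv
        simp at hv; subst hv
        rw [hlast] at hu; simp at hu; subst hu
        exact ⟨by simp, by simp, hbc.2.2⟩
      · rw [List.head?_append_of_ne_nil _ (by rintro rfl; simp at hh)]
        exact hh
      · intro y hy
        rcases List.mem_append.mp hy with h' | h'
        · exact hlS y h'
        · simp at h'; subst h'; exact hbc.2.1

lemma critical_self {x : A} : critical rs θ x x := by
  intro l hl; exact mem_of_getLast?_eq hl.2.2.2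

lemma critical_antisymm [DecidableEq A] {a b : A} (hab : critical rs θ a b)
    (hba : critical rs θ b a) (ha : participates rs θ (∅ : Set A) a) : a = b := by
  by_contra hne
  obtain ⟨l, hl, -⟩ := participates_pathTo ha
  have hb : b ∈ l := hba l hl
  obtain ⟨l₁, l₂, heq, hl'⟩ := pathTo_split hl hb
  have hal : a ∈ l₁ ++ [b] := hab _ hl'
  have ha1 : a ∈ l₁ := by
    rcases List.mem_append.mp hal with h' | h'
    · exact h'
    · simp at h'; exact absurd h' hne
  have hlast := hl.2.2.2
  rw [heq, List.getLast?_append_of_ne_nil _ (by simp)] at hlast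
  have ha2 : a ∈ b :: l₂ := mem_of_getLast?_eq hlast
  have hnd := hl.1
  rw [heq, List.nodup_append] at hnd
  exact hnd.2.2 a ha1 a ha2 rfl

end helpers

/-- Hiding neighbours cannot help a non-selected critical agent: if under truthful
reporting agent `i = i_k` is a critical agent preceding the selected agent
(`k < t`, expected utility w_{k+1} - w_k), and `i` misreports only her neighbour set
(`ρ.f = f_i`, `ρ.c = c_i`, `ρ.nbrs ⊆ r_i`) so that in the new run the selected agent
is not a critical agent of the original welfare-maximizer, while `i = i'_{k'}` still
precedes the new selected agent (`k' < t'`), then her new utility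
w'_{k'+1} - w'_{k'} is at most her original utility w_{k+1} - w_k. -/
theorem stmt_9 {A : Type*} [DecidableEq A] (Q : Finset ℝ) (rs : Finset A)
    (θ : A → Report A) (i : A) (ρ : Report A)
    (hρf : ρ.f = (θ i).f) (hρc : ρ.c = (θ i).c) (hρn : ρ.nbrs ⊆ (θ i).nbrs)
    (R : PEVRun Q rs θ) (R' : PEVRun Q rs (Function.update θ i ρ))
    (k k' : ℕ) (hk : R.seq k = i) (hkt : k < R.t)
    (hk' : R'.seq k' = i) (hk't : k' < R'.t)
    (hnotcrit : ¬ critical rs θ (R'.seq R'.t) (R.seq (R.m - 1))) :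
    R'.w (k' + 1) - R'.w k' ≤ R.w (k + 1) - R.w k := by
  have hwel : ∀ x, welfare Q ((Function.update θ i ρ) x) = welfare Q (θ x) := by
    intro x
    by_cases hx : x = i
    · subst hx
      simp only [Function.update_self, welfare, hρf, hρc]
    · simp only [Function.update_of_ne hx]
  have hedge : ∀ (T : Set A) a b, edge (Function.update θ i ρ) T a b → edge θ T a b := by
    rintro T a b ⟨h1, h2, h3⟩
    refine ⟨h1, h2, ?_⟩
    by_cases ha : a = i
    · subst ha
      rw [Function.update_self] at h3
      exact hρn h3
    · rwa [Function.update_of_ne ha] at h3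
  have hmono : ∀ a b, edge (Function.update θ i ρ) ∅ a b → edge θ ∅ a b := hedge ∅
  have hpartm : ∀ (T : Set A) x, participates rs (Function.update θ i ρ) T x → participates rs θ T x := by
    rintro T x ⟨hx, a, ha, haT, hrel⟩
    exact ⟨hx, a, ha, haT, Relation.ReflTransGen.mono (hedge T) _ _ hrel⟩
  have hkm : k + 1 < R.m := lt_of_le_of_lt hkt R.ht
  have hk'm : k' + 1 < R'.m := lt_of_le_of_lt hk't R'.ht
  have hcm := R.hw k (by omega)
  rw [hk] at hcm
  have hcm' := R'.hw k' (by omega)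
  rw [hk'] at hcm'
  -- Step 1 : R'.w k' = R.w k
  have hpi : ∀ x, participates rs (Function.update θ i ρ) ({i} : Set A) x ↔ participates rs θ ({i} : Set A) x := by
    intro x
    have he : ∀ a b, edge θ ({i} : Set A) a b → edge (Function.update θ i ρ) ({i} : Set A) a b := by
      rintro a b ⟨h1, h2, h3⟩
      refine ⟨h1, h2, ?_⟩
      rw [Function.update_of_ne (by simpa using h1)]
      exact h3
    constructor
    · exact hpartm _ x
    · rintro ⟨hx, a, ha, haT, hrel⟩
      exact ⟨hx, a, ha, haT, Relation.ReflTransGen.mono he _ _ hrel⟩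
  have hw1 : R'.w k' = R.w k := by
    have le1 : R'.w k' ≤ R.w k := by
      rcases hcm'.2.2 with h0 | ⟨z, hz, hzv⟩
      · rw [h0]; exact hcm.1
      · rw [hzv, hwel z]; exact hcm.2.1 z ((hpi z).1 hz)
    have le2 : R.w k ≤ R'.w k' := by
      rcases hcm.2.2 with h0 | ⟨z, hz, hzv⟩
      · rw [h0]; exact hcm'.1
      · rw [hzv, ← hwel z]; exact hcm'.2.1 z ((hpi z).2 hz)
    linarith
  -- Step 2 : R'.w (k'+1) ≤ R.w (k+1)
  have hcb := R.hw (k+1) hkm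
  have hcb' := R'.hw (k'+1) hk'm
  have hw2 : R'.w (k' + 1) ≤ R.w (k + 1) := by
    rcases hcb'.2.2 with h0 | ⟨p, hp, hpv⟩
    · rw [h0]; exact hcb.1
    rw [hpv, hwel p]
    by_cases hcase : participates rs θ ({R.seq (k+1)} : Set A) p
    · exact hcb.2.1 p hcase
    have hbne : R.seq (k+1) ≠ i := by
      intro h
      have := R.hinj (k+1) hkm k (by omega) (h.trans hk.symm)
      omega
    -- b is (Function.update θ i ρ)-reachable avoiding b'
    have Hb : participates rs (Function.update θ i ρ) ({R'.seq (k'+1)} : Set A) (R.seq (k+1)) := by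
      by_cases hpb : p = R.seq (k+1)
      · rwa [hpb] at hp
      · have hcbp : critical rs θ (R.seq (k+1)) p := by
          intro l hl
          by_contra hbl
          refine hcase (pathTo_participates hl ?_)
          intro y hy
          simp only [Set.mem_singleton_iff]
          rintro rfl
          exact hbl hy
        have hcbp' : critical rs (Function.update θ i ρ) (R.seq (k+1)) p := critical_mono hmono hcbp
        obtain ⟨l, hl, hlS⟩ := participates_pathTo hp
        have hbl : R.seq (k+1) ∈ l := hcbp' l hl
        obtain ⟨l₁, l₂, heq, hl'⟩ := pathTo_split hl hbl
        refine pathTo_participates hl' ?_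
        intro y hy
        refine hlS y ?_
        rw [heq]
        simp only [List.mem_append, List.mem_cons, List.mem_singleton] at hy ⊢
        tauto
    -- b is not (Function.update θ i ρ)-critical for j'
    have hnc : ¬ critical rs (Function.update θ i ρ) (R.seq (k+1)) (R'.seq (R'.m - 1)) := by
      intro hcr
      have hbI' : participates rs (Function.update θ i ρ) (∅ : Set A) (R.seq (k+1)) :=
        participates_mono (Set.empty_subset _) Hb
      obtain ⟨l', hl'm, hl'eq⟩ := (R'.hcrit (R.seq (k+1))).2 ⟨hcr, hbI'⟩
      rcases lt_trichotomy l' k' with hlt | heq | hgt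
      · have h1 : critical rs (Function.update θ i ρ) (R.seq (k+1)) i := by
          have := R'.hord l' k' hlt (by omega)
          rwa [hl'eq, hk'] at this
        have h2 : critical rs (Function.update θ i ρ) i (R.seq (k+1)) := by
          have := R.hord k (k+1) (by omega) hkm
          rw [hk] at this
          exact critical_mono hmono this
        exact hbne (critical_antisymm h1 h2 hbI')
      · rw [heq, hk'] at hl'eq
        exact hbne hl'eq.symm
      · rcases eq_or_lt_of_le (by omega : k' + 1 ≤ l') with heq2 | hgt2
        · refine Hb.1 ?_
          rw [heq2, hl'eq]
          exact rfl
        · have h3 : critical rs (Function.update θ i ρ) (R'.seq (k'+1)) (R.seq (k+1)) := by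
            have := R'.hord (k'+1) l' hgt2 hl'm
            rwa [hl'eq] at this
          obtain ⟨l, hl, hlS⟩ := participates_pathTo Hb
          exact hlS _ (h3 l hl) rfl
    -- hence j' is θ-reachable avoiding b
    have hj'Ib : participates rs θ ({R.seq (k+1)} : Set A) (R'.seq (R'.m - 1)) := by
      unfold critical at hnc
      push_neg at hnc
      obtain ⟨l, hl, hbnotin⟩ := hnc
      refine pathTo_participates (pathTo_mono hmono hl) ?_
      intro y hy
      simp only [Set.mem_singleton_iff]
      rintro rfl
      exact hbnotin hy
    have hpI' : participates rs (Function.update θ i ρ) (∅ : Set A) p := participates_mono (Set.empty_subset _) hp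
    calc welfare Q (θ p) = welfare Q ((Function.update θ i ρ) p) := (hwel p).symm
      _ ≤ welfare Q ((Function.update θ i ρ) (R'.seq (R'.m - 1))) := R'.hj.2 p hpI'
      _ = welfare Q (θ (R'.seq (R'.m - 1))) := hwel _
      _ ≤ R.w (k + 1) := hcb.2.1 _ hj'Ib
  linarith
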